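/- Let K be an algebraically closed field and n ≥ 1. Let A = Kⁿ as an additive group, let T = Kˣ act on A by the automorphisms d_t(a₁, …, aₙ) = (t·a₁, t²·a₂, …, tⁿ·aₙ), and let G = A ⋊ T be the corresponding semidirect product. Let B be a linear hyperplane of Kⁿ with B ∩ K·eᵢ = {0} for every standard basis vector eᵢ, regarded as a subgroup of G via the inclusions B ≤ A ≤ G. Then the normal core of B in G (the largest normal subgroup of G contained in B, equivalently ⋂_{g ∈ G} g B g⁻¹) is trivial; equivalently, the action of G by left multiplication on the coset space G/B is faithful. -/

import Mathlib

/-- The multiplicative group structure that older Mathlib put on `AddAut A`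
(multiplication is composition), restored here. -/
instance addAutGroupOld {A : Type*} [Add A] : Group (AddAut A) where
  mul g h := AddEquiv.trans h g
  one := AddEquiv.refl _
  inv := AddEquiv.symm
  mul_assoc _ _ _ := rfl
  one_mul _ := rfl
  mul_one _ := rfl
  inv_mul_cancel := AddEquiv.self_trans_symm

/-- The canonical group homomorphism from additive automorphisms of an additive
group `A` to multiplicative automorphisms of `Multiplicative A`. -/
def addAutToMulAut {A : Type*} [AddGroup A] : AddAut A →* MulAut (Multiplicative A) where
  toFun f := AddEquiv.toMultiplicative f
  map_one' := rfl
  map_mul' _ _ := rfl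

open Polynomial in
private lemma key' {K : Type*} [Field K] [Infinite K] {n : ℕ} (c : Fin n → K)
    (h : ∀ t : K, t ≠ 0 → ∑ i : Fin n, c i * t ^ (i.val + 1) = 0) :
    ∀ i, c i = 0 := by
  set p : K[X] := ∑ i : Fin n, C (c i) * X ^ (i.val + 1) with hp
  have hev : ∀ t : K, p.eval t = 0 := by
    intro t
    rcases eq_or_ne t 0 with rfl | ht
    · simp [hp, eval_finset_sum]
    · simpa [hp, eval_finset_sum] using h t ht
  have hp0 : p = 0 := by
    apply Polynomial.funext
    intro t; simp [hev t]
  intro j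
  have := congrArg (fun q => Polynomial.coeff q (j.val + 1)) hp0
  simp only [hp, Polynomial.finset_sum_coeff, Polynomial.coeff_C_mul,
    Polynomial.coeff_X_pow, Polynomial.coeff_zero] at this
  rw [Finset.sum_eq_single j] at this
  · simpa using this
  · intro i _ hij
    have h2 : (j.val : ℕ) + 1 ≠ i.val + 1 := by
      simpa using fun he => hij (Fin.val_injective he).symm
    simp [h2]
    intro he; exact absurd (Fin.val_injective he).symm hij
  · simp

private lemma key2 {K : Type*} [Field K] [Infinite K] {n : ℕ}
    (B : Submodule K (Fin n → K))
    (hB : Module.finrank K ((Fin n → K) ⧸ B) = 1)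
    (hBe : ∀ i : Fin n, B ⊓ Submodule.span K {(Pi.single i 1 : Fin n → K)} = ⊥)
    (b : Fin n → K) (hall : ∀ t : K, t ≠ 0 → (fun i => t ^ (i.val + 1) * b i) ∈ B) :
    b = 0 := by
  have : Module.Finite K ((Fin n → K) ⧸ B) := Module.finite_of_finrank_eq_succ hB
  have hfr : Module.finrank K ((Fin n → K) ⧸ B) = Module.finrank K K := by
    simpa using hB
  obtain ⟨e⟩ := FiniteDimensional.nonempty_linearEquiv_of_finrank_eq hfr
  set f : (Fin n → K) →ₗ[K] K := e.toLinearMap ∘ₗ B.mkQ with hf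
  have hker : ∀ x : Fin n → K, f x = 0 ↔ x ∈ B := by
    intro x
    rw [hf]
    simp only [LinearMap.comp_apply, LinearEquiv.coe_coe, EmbeddingLike.map_eq_zero_iff]
    rw [Submodule.mkQ_apply, Submodule.Quotient.mk_eq_zero]
  have hfe : ∀ i : Fin n, f (Pi.single i 1) ≠ 0 := by
    intro i hfi
    have hmem : (Pi.single i 1 : Fin n → K) ∈ B := (hker _).mp hfi
    have : (Pi.single i 1 : Fin n → K) ∈
        B ⊓ Submodule.span K {(Pi.single i 1 : Fin n → K)} :=
      ⟨hmem, Submodule.mem_span_singleton_self _⟩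
    rw [hBe i] at this
    have := congrFun (Submodule.mem_bot K |>.mp this) i
    simp at this
  have hc : ∀ i : Fin n, b i * f (Pi.single i 1) = 0 := by
    apply key'
    intro t ht
    have h0 : f (fun i => t ^ (i.val + 1) * b i) = 0 := (hker _).mpr (hall t ht)
    rw [LinearMap.pi_apply_eq_sum_univ] at h0
    rw [← h0]
    apply Finset.sum_congr rfl
    intro i _
    have : (fun j => if i = j then (1:K) else 0) = Pi.single i 1 := by
      ext j
      simp [Pi.single_apply, eq_comm]
    rw [this, smul_eq_mul]
    ring
  ext i
  have := hc i
  rcases mul_eq_zero.mp this with h | h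
  · simpa using h
  · exact absurd h (hfe i)

/-- Let `K` be an algebraically closed field, `n ≥ 1`, `A = Kⁿ` (as an additive group),
`T = Kˣ` acting on `A` by `d t (a₁, …, aₙ) = (t·a₁, t²·a₂, …, tⁿ·aₙ)`, and
`G = A ⋊ T` the corresponding semidirect product. If `B` is a linear hyperplane of
`Kⁿ` with `B ∩ K·eᵢ = 0` for all standard basis vectors `eᵢ`, regarded as a subgroup
of `G`, then the normal core of `B` in `G` is trivial. -/
theorem stmt_1 {K : Type*} [Field K] [IsAlgClosed K] (n : ℕ) (hn : 1 ≤ n)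
    (d : Kˣ →* AddAut (Fin n → K))
    (hd : ∀ (t : Kˣ) (a : Fin n → K) (i : Fin n), d t a i = (t : K) ^ (i.val + 1) * a i)
    (B : Submodule K (Fin n → K))
    (hB : Module.finrank K ((Fin n → K) ⧸ B) = 1)
    (hBe : ∀ i : Fin n, B ⊓ Submodule.span K {(Pi.single i 1 : Fin n → K)} = ⊥) :
    (Subgroup.map
        (SemidirectProduct.inl (φ := addAutToMulAut.comp d))
        (AddSubgroup.toSubgroup B.toAddSubgroup)).normalCore = ⊥ := by
  rw [eq_bot_iff]
  intro g hg
  have hg' := Subgroup.normalCore_le _ hg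
  rw [Subgroup.mem_map] at hg'
  obtain ⟨b, hb, rfl⟩ := hg'
  have hall : ∀ u : Kˣ, d u (Multiplicative.toAdd b) ∈ B := by
    intro u
    have hconj := (Subgroup.normalCore_normal _).conj_mem _ hg
      (SemidirectProduct.inr (φ := addAutToMulAut.comp d) u)
    rw [← map_inv, ← SemidirectProduct.inl_aut] at hconj
    have h2 := Subgroup.normalCore_le _ hconj
    rw [Subgroup.mem_map] at h2
    obtain ⟨c, hc, hceq⟩ := h2
    have hcb : c = (addAutToMulAut.comp d) u b := SemidirectProduct.inl_injective hceq
    subst hcb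
    exact hc
  have hall' : ∀ t : K, t ≠ 0 →
      (fun i => t ^ (i.val + 1) * (Multiplicative.toAdd b) i) ∈ B := by
    intro t ht
    have heq : (fun i => t ^ (i.val + 1) * (Multiplicative.toAdd b) i)
        = d (Units.mk0 t ht) (Multiplicative.toAdd b) := by
      ext i
      rw [hd]
      simp
    rw [heq]
    exact hall _
  have hb0 : Multiplicative.toAdd b = 0 := key2 B hB hBe _ hall'
  have hb1 : b = 1 := by
    have := congrArg Multiplicative.ofAdd hb0
    simpa using this
  rw [hb1]
  simp
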